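/- Let (f_n(q))_{n≥0} be a nicely bounded sequence of Laurent polynomials with integer coefficients, and for n ≥ 0 define c_n = Σ_{k=0}^{n} ⟨(f_k(q)·(q)_k)(e^{1/x})⟩_n, where (q)_k = ∏_{j=1}^k (1 − q^j). Then the sequence (c_n) is Gevrey: there exists a constant C > 0 such that |c_n| ≤ C^n·n! for all n ≥ 1. (Equivalently: for every element f(q) = Σ_{n≥0} f_n(q)·(q)_n of the Habiro ring with nicely bounded coefficient sequence, the Taylor series f(e^{1/x}) ∈ ℚ[[1/x]] is Gevrey.) -/

import Mathlib

/-- A sequence of integer Laurent polynomials is *nicely bounded* if the support of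
`f n` lies in `[−C'·n², C'·n²]` and the ℓ¹-norm of `f n` is at most `C^n`, for all `n ≥ 1`. -/
def NicelyBounded (f : ℕ → LaurentPolynomial ℤ) : Prop :=
  ∃ C C' : ℝ, 0 < C ∧ 0 < C' ∧ ∀ n : ℕ, 1 ≤ n →
    (∀ j ∈ (f n).coeff.support, |(j : ℝ)| ≤ C' * (n : ℝ) ^ 2) ∧
    (∑ j ∈ (f n).coeff.support, |((f n).coeff j : ℝ)|) ≤ C ^ n

/-- For a Laurent polynomial `p(q) = ∑_j a_j q^j`, `laurentExpCoeff p n` is the coefficient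
`⟨p(e^{1/x})⟩_n = (1/n!)·∑_j a_j·j^n` of `x^{−n}` in the Taylor expansion of `p(e^{1/x})`. -/
noncomputable def laurentExpCoeff (p : LaurentPolynomial ℤ) (n : ℕ) : ℝ :=
  (1 / (n.factorial : ℝ)) * ∑ j ∈ p.coeff.support, (p.coeff j : ℝ) * (j : ℝ) ^ n

/-- The Laurent polynomial `(q)_k = ∏_{j=1}^k (1 − q^j)`. -/
noncomputable def qPochhammer' (k : ℕ) : LaurentPolynomial ℤ :=
  ∏ j ∈ Finset.range k, (1 - LaurentPolynomial.T (j + 1))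


open Finset

noncomputable def L1 (p : LaurentPolynomial ℤ) : ℝ := ∑ j ∈ p.coeff.support, |(p.coeff j : ℝ)|

lemma L1_nonneg (p : LaurentPolynomial ℤ) : 0 ≤ L1 p :=
  Finset.sum_nonneg fun _ _ => abs_nonneg _

lemma L1_mul (p q : LaurentPolynomial ℤ) : L1 (p * q) ≤ L1 p * L1 q := by
  classical
  unfold L1
  have hle : ∀ j ∈ (p * q).coeff.support,
      |((p * q).coeff j : ℝ)| ≤ ∑ a ∈ p.coeff.support, ∑ b ∈ q.coeff.support,
        (if a + b = j then |(p.coeff a : ℝ)| * |(q.coeff b : ℝ)| else 0) := by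
    intro j _
    rw [AddMonoidAlgebra.mul_apply]
    simp only [Finsupp.sum]
    push_cast
    refine (Finset.abs_sum_le_sum_abs _ _).trans (Finset.sum_le_sum fun a _ => ?_)
    refine (Finset.abs_sum_le_sum_abs _ _).trans (Finset.sum_le_sum fun b _ => ?_)
    split_ifs with h
    · rw [abs_mul]
    · simp
  calc ∑ j ∈ (p * q).coeff.support, |((p * q).coeff j : ℝ)|
      ≤ ∑ j ∈ (p * q).coeff.support, ∑ a ∈ p.coeff.support, ∑ b ∈ q.coeff.support,
        (if a + b = j then |(p.coeff a : ℝ)| * |(q.coeff b : ℝ)| else 0) :=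
        Finset.sum_le_sum hle
    _ = ∑ a ∈ p.coeff.support, ∑ b ∈ q.coeff.support, ∑ j ∈ (p * q).coeff.support,
        (if a + b = j then |(p.coeff a : ℝ)| * |(q.coeff b : ℝ)| else 0) := by
        rw [Finset.sum_comm]
        exact Finset.sum_congr rfl fun a _ => Finset.sum_comm
    _ ≤ ∑ a ∈ p.coeff.support, ∑ b ∈ q.coeff.support, |(p.coeff a : ℝ)| * |(q.coeff b : ℝ)| := by
        refine Finset.sum_le_sum fun a _ => Finset.sum_le_sum fun b _ => ?_
        rw [Finset.sum_ite_eq]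
        split_ifs
        · exact le_rfl
        · positivity
    _ = (∑ a ∈ p.coeff.support, |(p.coeff a : ℝ)|) * ∑ b ∈ q.coeff.support, |(q.coeff b : ℝ)| := by
        rw [Finset.sum_mul_sum]

lemma support_mul_bound {p q : LaurentPolynomial ℤ} {M N : ℝ}
    (hp : ∀ a ∈ p.coeff.support, |(a : ℝ)| ≤ M) (hq : ∀ b ∈ q.coeff.support, |(b : ℝ)| ≤ N) :
    ∀ j ∈ (p * q).coeff.support, |(j : ℝ)| ≤ M + N := by
  classical
  intro j hj
  have h := AddMonoidAlgebra.support_coeff_mul_subset p q hj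
  rw [Finset.mem_add] at h
  obtain ⟨a, ha, b, hb, rfl⟩ := h
  push_cast
  exact (abs_add_le _ _).trans (add_le_add (hp a ha) (hq b hb))

lemma abs_coeff_one_le (j : ℤ) : |((1 : LaurentPolynomial ℤ).coeff j : ℝ)| ≤ 1 := by
  rw [← LaurentPolynomial.single_zero_one_eq_one]
  rw [AddMonoidAlgebra.coeff_single, Finsupp.single_apply]
  split_ifs <;> simp

lemma poch_bound (k : ℕ) :
    (∀ j ∈ (qPochhammer' k).coeff.support, |(j : ℝ)| ≤ (k : ℝ) ^ 2) ∧
      L1 (qPochhammer' k) ≤ 2 ^ k := by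
  classical
  induction k with
  | zero =>
    have h1 : qPochhammer' 0 = 1 := by simp [qPochhammer']
    rw [h1]
    constructor
    · intro j hj
      rw [← LaurentPolynomial.single_zero_one_eq_one] at hj
      rw [AddMonoidAlgebra.coeff_single, Finsupp.support_single_ne_zero _ one_ne_zero] at hj
      simp only [Finset.mem_singleton] at hj
      simp [hj]
    · unfold L1
      rw [← LaurentPolynomial.single_zero_one_eq_one, AddMonoidAlgebra.coeff_single,
        Finsupp.support_single_ne_zero _ one_ne_zero]
      rw [Finset.sum_singleton, Finsupp.single_apply]
      norm_num
  | succ k ih =>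
    set g : LaurentPolynomial ℤ := 1 - LaurentPolynomial.T ((k : ℤ) + 1) with hgdef
    have hstep : qPochhammer' (k + 1) = qPochhammer' k * g := by
      rw [qPochhammer', Finset.prod_range_succ, ← qPochhammer', hgdef]
    have hgsupp : g.coeff.support ⊆ {0, (k : ℤ) + 1} := by
      rw [hgdef, AddMonoidAlgebra.coeff_sub]
      refine Finsupp.support_sub.trans ?_
      apply Finset.union_subset
      · rw [← LaurentPolynomial.single_zero_one_eq_one, AddMonoidAlgebra.coeff_single,
          Finsupp.support_single_ne_zero _ one_ne_zero]
        intro x hx; simp at hx; simp [hx]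
      · rw [LaurentPolynomial.T, AddMonoidAlgebra.coeff_single]
        refine Finsupp.support_single_subset.trans ?_
        intro x hx; simp at hx; simp [hx]
    constructor
    · rw [hstep]
      intro j hj
      have := support_mul_bound (M := (k : ℝ) ^ 2) (N := (k : ℝ) + 1) ih.1
        (fun b hb => ?_) j hj
      · calc |(j : ℝ)| ≤ (k : ℝ) ^ 2 + ((k : ℝ) + 1) := this
          _ ≤ ((k : ℝ) + 1) ^ 2 := by nlinarith [Nat.cast_nonneg (α := ℝ) k]
          _ = ((k + 1 : ℕ) : ℝ) ^ 2 := by push_cast; ring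
      · have hin := hgsupp hb
        simp only [Finset.mem_insert, Finset.mem_singleton] at hin
        rcases hin with h | h
        · rw [h]; simp; positivity
        · rw [h]; push_cast; rw [abs_of_nonneg (by positivity)]
    · rw [hstep]
      refine (L1_mul _ _).trans ?_
      have hg : L1 g ≤ 2 := by
        unfold L1
        refine le_trans (Finset.sum_le_sum_of_subset_of_nonneg hgsupp
          (fun _ _ _ => abs_nonneg _)) ?_
        rw [Finset.sum_pair (by positivity)]
        have h0 : |(g.coeff 0 : ℝ)| ≤ 1 := by
          rw [hgdef, AddMonoidAlgebra.coeff_sub, Finsupp.sub_apply]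
          push_cast
          refine (abs_sub _ _).trans ?_
          have : |((LaurentPolynomial.T ((k : ℤ) + 1) : LaurentPolynomial ℤ).coeff 0 : ℝ)| = 0 := by
            rw [LaurentPolynomial.T_apply]
            split_ifs with h
            · omega
            · simp
          rw [this, add_zero]
          exact abs_coeff_one_le 0
        have h1 : |(g.coeff ((k : ℤ) + 1) : ℝ)| ≤ 1 := by
          rw [hgdef, AddMonoidAlgebra.coeff_sub, Finsupp.sub_apply]
          push_cast
          refine (abs_sub _ _).trans ?_
          have hone : |((1 : LaurentPolynomial ℤ).coeff ((k : ℤ) + 1) : ℝ)| = 0 := by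
            rw [← LaurentPolynomial.single_zero_one_eq_one, AddMonoidAlgebra.coeff_single, Finsupp.single_apply]
            split_ifs with h
            · omega
            · simp
          rw [hone, zero_add, LaurentPolynomial.T_apply]
          split_ifs <;> simp
        linarith
      calc L1 (qPochhammer' k) * L1 g
          ≤ 2 ^ k * 2 := by
            exact mul_le_mul ih.2 hg (L1_nonneg _) (by positivity)
        _ = 2 ^ (k + 1) := by ring



lemma sum_pow_bound (p : LaurentPolynomial ℤ) {M : ℝ}
    (hs : ∀ j ∈ p.coeff.support, |(j : ℝ)| ≤ M) (n : ℕ) :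
    |∑ j ∈ p.coeff.support, (p.coeff j : ℝ) * (j : ℝ) ^ n| ≤ L1 p * M ^ n := by
  refine (Finset.abs_sum_le_sum_abs _ _).trans ?_
  rw [L1, Finset.sum_mul]
  refine Finset.sum_le_sum fun j hj => ?_
  rw [abs_mul, abs_pow]
  exact mul_le_mul_of_nonneg_left (pow_le_pow_left₀ (abs_nonneg _) (hs j hj) n) (abs_nonneg _)

lemma cast_pow_self_le (n : ℕ) : ((n : ℝ)) ^ n ≤ 3 ^ n * (n.factorial : ℝ) := by
  have h := Real.pow_div_factorial_le_exp (x := (n : ℝ)) (Nat.cast_nonneg n) n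
  have he : Real.exp (n : ℝ) = Real.exp 1 ^ n := by
    rw [← Real.exp_nat_mul, mul_one]
  have h3 : Real.exp 1 ≤ 3 := le_of_lt (lt_trans Real.exp_one_lt_d9 (by norm_num))
  have hfac : (0 : ℝ) < (n.factorial : ℝ) := by positivity
  rw [div_le_iff₀ hfac] at h
  calc ((n : ℝ)) ^ n ≤ Real.exp n * (n.factorial : ℝ) := h
    _ ≤ 3 ^ n * (n.factorial : ℝ) := by
        rw [he]
        exact mul_le_mul_of_nonneg_right
          (pow_le_pow_left₀ (Real.exp_pos 1).le h3 n) hfac.le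

lemma final_eq (b m F : ℝ) (hF : F ≠ 0) (n : ℕ) :
    2 ^ n * ((1 / F) * (b ^ n * (m ^ n * (9 ^ n * F ^ 2)))) = (18 * b * m) ^ n * F := by
  have h18 : ((18 : ℝ)) ^ n = 2 ^ n * 9 ^ n := by rw [← mul_pow]; norm_num
  rw [mul_pow, mul_pow, h18]
  field_simp

/-- If `(f_n(q))` is a nicely bounded sequence of integer Laurent polynomials, then the
Taylor series at `q = e^{1/x}` of the Habiro-ring element `∑_n f_n(q)·(q)_n`, whose `n`-th
coefficient is the finite sum `c_n = ∑_{k=0}^n ⟨(f_k(q)·(q)_k)(e^{1/x})⟩_n`, is Gevrey. -/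
theorem habiro_nicelyBounded_gevrey (f : ℕ → LaurentPolynomial ℤ)
    (hf : NicelyBounded f)
    (c : ℕ → ℝ)
    (hc : ∀ n : ℕ, c n = ∑ k ∈ Finset.range (n + 1), laurentExpCoeff (f k * qPochhammer' k) n) :
    ∃ C : ℝ, 0 < C ∧ ∀ n : ℕ, 1 ≤ n → |c n| ≤ C ^ n * (n.factorial : ℝ) := by
  classical
  obtain ⟨C, C', hC, hC', hfb⟩ := hf
  set M0 : ℝ := ∑ j ∈ (f 0).coeff.support, |(j : ℝ)| with hM0def
  have hM0 : 0 ≤ M0 := Finset.sum_nonneg fun _ _ => abs_nonneg _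
  have hM0b : ∀ j ∈ (f 0).coeff.support, |(j : ℝ)| ≤ M0 := by
    intro j hj
    rw [hM0def]
    exact Finset.single_le_sum (s := (f 0).coeff.support) (f := fun i : ℤ => |(i : ℝ)|)
      (fun i _ => abs_nonneg _) hj
  set B : ℝ := max (max (2 * C) (L1 (f 0))) 1 with hBdef
  have hB1 : (1 : ℝ) ≤ B := le_max_right _ _
  have hB0 : (0 : ℝ) < B := lt_of_lt_of_le one_pos hB1
  set M : ℝ := C' + 1 + M0 with hMdef
  have hM : (0 : ℝ) < M := by positivity
  refine ⟨18 * B * M, by positivity, fun n hn => ?_⟩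
  have hn0 : n ≠ 0 := by omega
  have hn1 : (1 : ℝ) ≤ (n : ℝ) := by exact_mod_cast hn
  have hF : (0 : ℝ) < (n.factorial : ℝ) := by positivity
  have hnsq : (1 : ℝ) ≤ (n : ℝ) ^ 2 := by nlinarith
  have hterm : ∀ k ≤ n, |laurentExpCoeff (f k * qPochhammer' k) n| ≤
      (1 / (n.factorial : ℝ)) * (B ^ n * (M * (n : ℝ) ^ 2) ^ n) := by
    intro k hk
    have hpoch0 : qPochhammer' 0 = 1 := by simp [qPochhammer']
    have hsupp : ∀ j ∈ (f k * qPochhammer' k).coeff.support, |(j : ℝ)| ≤ M * (n : ℝ) ^ 2 := by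
      rcases Nat.eq_zero_or_pos k with rfl | hkpos
      · rw [hpoch0, mul_one]
        intro j hj
        calc |(j : ℝ)| ≤ M0 := hM0b j hj
          _ ≤ M * (n : ℝ) ^ 2 := by
            rw [hMdef]
            nlinarith [mul_le_mul_of_nonneg_left hnsq hM0,
              mul_nonneg hC'.le (sq_nonneg (n : ℝ)), sq_nonneg (n : ℝ)]
      · intro j hj
        have h1 := (hfb k hkpos).1
        have h2 := (poch_bound k).1
        have h3 := support_mul_bound h1 h2 j hj
        have hkn : (k : ℝ) ≤ (n : ℝ) := by exact_mod_cast hk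
        have hkp : (0 : ℝ) ≤ (k : ℝ) := Nat.cast_nonneg k
        have hk2 : (k : ℝ) ^ 2 ≤ (n : ℝ) ^ 2 := by nlinarith
        calc |(j : ℝ)| ≤ C' * (k : ℝ) ^ 2 + (k : ℝ) ^ 2 := h3
          _ ≤ M * (n : ℝ) ^ 2 := by
            rw [hMdef]
            nlinarith [mul_le_mul_of_nonneg_left hk2 hC'.le,
              mul_nonneg hM0 (sq_nonneg (n : ℝ))]
    have hL1 : L1 (f k * qPochhammer' k) ≤ B ^ n := by
      rcases Nat.eq_zero_or_pos k with rfl | hkpos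
      · rw [hpoch0, mul_one]
        calc L1 (f 0) ≤ B := le_trans (le_max_right _ _) (le_max_left _ _)
          _ ≤ B ^ n := le_self_pow₀ hB1 hn0
      · calc L1 (f k * qPochhammer' k) ≤ L1 (f k) * L1 (qPochhammer' k) := L1_mul _ _
          _ ≤ C ^ k * 2 ^ k := mul_le_mul (hfb k hkpos).2 (poch_bound k).2
              (L1_nonneg _) (le_of_lt (pow_pos hC k))
          _ = (2 * C) ^ k := by rw [mul_pow]; ring
          _ ≤ B ^ k := pow_le_pow_left₀ (by positivity)
              (le_trans (le_max_left _ _) (le_max_left _ _)) k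
          _ ≤ B ^ n := pow_le_pow_right₀ hB1 hk
    rw [laurentExpCoeff, abs_mul,
      abs_of_nonneg (by positivity : (0 : ℝ) ≤ 1 / (n.factorial : ℝ))]
    refine mul_le_mul_of_nonneg_left ?_ (by positivity)
    calc |∑ j ∈ (f k * qPochhammer' k).coeff.support,
          ((f k * qPochhammer' k).coeff j : ℝ) * (j : ℝ) ^ n|
        ≤ L1 (f k * qPochhammer' k) * (M * (n : ℝ) ^ 2) ^ n := sum_pow_bound _ hsupp n
      _ ≤ B ^ n * (M * (n : ℝ) ^ 2) ^ n :=
          mul_le_mul_of_nonneg_right hL1 (by positivity)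
  have hnn : ((n : ℝ) ^ 2) ^ n ≤ 9 ^ n * ((n.factorial : ℝ)) ^ 2 := by
    have h9 : ((3 : ℝ) ^ n) ^ 2 = 9 ^ n := by
      rw [← pow_mul, mul_comm, pow_mul]; norm_num
    calc ((n : ℝ) ^ 2) ^ n = (((n : ℝ)) ^ n) ^ 2 := by
          rw [← pow_mul, ← pow_mul, mul_comm]
      _ ≤ ((3 : ℝ) ^ n * (n.factorial : ℝ)) ^ 2 :=
          pow_le_pow_left₀ (by positivity) (cast_pow_self_le n) 2
      _ = 9 ^ n * ((n.factorial : ℝ)) ^ 2 := by rw [mul_pow, h9]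
  have hn2 : ((n : ℝ) + 1) ≤ 2 ^ n := by
    exact_mod_cast Nat.succ_le_of_lt (Nat.lt_two_pow_self (n := n))
  rw [hc n]
  calc |∑ k ∈ Finset.range (n + 1), laurentExpCoeff (f k * qPochhammer' k) n|
      ≤ ∑ k ∈ Finset.range (n + 1), |laurentExpCoeff (f k * qPochhammer' k) n| :=
        Finset.abs_sum_le_sum_abs _ _
    _ ≤ ∑ k ∈ Finset.range (n + 1),
        (1 / (n.factorial : ℝ)) * (B ^ n * (M * (n : ℝ) ^ 2) ^ n) :=
        Finset.sum_le_sum fun k hk => hterm k (Finset.mem_range_succ_iff.mp hk)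
    _ = ((n : ℝ) + 1) * ((1 / (n.factorial : ℝ)) * (B ^ n * (M ^ n * ((n : ℝ) ^ 2) ^ n))) := by
        rw [Finset.sum_const, Finset.card_range, mul_pow M]
        push_cast
        ring
    _ ≤ 2 ^ n * ((1 / (n.factorial : ℝ)) * (B ^ n * (M ^ n * (9 ^ n * ((n.factorial : ℝ)) ^ 2)))) := by
        refine mul_le_mul hn2 ?_ (by positivity) (by positivity)
        refine mul_le_mul_of_nonneg_left ?_ (by positivity)
        refine mul_le_mul_of_nonneg_left ?_ (by positivity)
        exact mul_le_mul_of_nonneg_left hnn (by positivity)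
    _ = (18 * B * M) ^ n * (n.factorial : ℝ) := final_eq B M _ hF.ne' n
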